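/- Let Θ = Q_Θ Λ_Θ Q_Θ^T and Ψ = Q_Ψ Λ_Ψ Q_Ψ^T with Q_Θ (p×p) and Q_Ψ (q×q) orthogonal, Λ_Θ = diag(λ_{Θ,1},…,λ_{Θ,p}) and Λ_Ψ = diag(λ_{Ψ,1},…,λ_{Ψ,q}) diagonal, and suppose λ_{Θ,l} + λ_{Ψ,k} ≠ 0 for all l, k. Let W = (Θ⊕Ψ)^{-1}. Then Σ_{i=1}^q (I_p⊗e_{q,i})^T W (I_p⊗e_{q,i}) = Q_Θ ( Σ_{k=1}^q (Λ_Θ + λ_{Ψ,k} I_p)^{-1} ) Q_Θ^T, and symmetrically Σ_{j=1}^p (e_{p,j}⊗I_q)^T W (e_{p,j}⊗I_q) = Q_Ψ ( Σ_{l=1}^p (Λ_Ψ + λ_{Θ,l} I_q)^{-1} ) Q_Ψ^T. -/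

import Mathlib

open Matrix
open scoped Kronecker

namespace EiGLasso

/-- The Kronecker sum `Θ ⊕ Ψ = Θ ⊗ I_q + I_p ⊗ Ψ`. -/
def kronSum {p q : ℕ} (A : Matrix (Fin p) (Fin p) ℝ) (B : Matrix (Fin q) (Fin q) ℝ) :
    Matrix (Fin p × Fin q) (Fin p × Fin q) ℝ :=
  A ⊗ₖ (1 : Matrix (Fin q) (Fin q) ℝ) + (1 : Matrix (Fin p) (Fin p) ℝ) ⊗ₖ B

/-- The `pq × p` selection matrix `I_p ⊗ e_{q,i}`, where `e_{q,i}` is the `i`-th one-hot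
vector in `ℝ^q`.  Row `(j', i')` (i.e. row `(j'-1)q + i'`), column `j`. -/
def selTheta (p q : ℕ) (i : Fin q) : Matrix (Fin p × Fin q) (Fin p) ℝ :=
  Matrix.of fun x j => if x = (j, i) then (1 : ℝ) else 0

/-- The `pq × q` selection matrix `e_{p,j} ⊗ I_q`. -/
def selPsi (p q : ℕ) (j : Fin p) : Matrix (Fin p × Fin q) (Fin q) ℝ :=
  Matrix.of fun x i => if x = (j, i) then (1 : ℝ) else 0

/-- `P_Θ = ∑_{i=1}^q I_p ⊗ e_{q,i} ⊗ I_p ⊗ e_{q,i}`, a `p²q² × p²` matrix. -/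
def Ptheta (p q : ℕ) : Matrix ((Fin p × Fin q) × (Fin p × Fin q)) (Fin p × Fin p) ℝ :=
  ∑ i : Fin q, (selTheta p q i) ⊗ₖ (selTheta p q i)

/-- `P_Ψ = ∑_{j=1}^p e_{p,j} ⊗ I_q ⊗ e_{p,j} ⊗ I_q`, a `p²q² × q²` matrix. -/
def Ppsi (p q : ℕ) : Matrix ((Fin p × Fin q) × (Fin p × Fin q)) (Fin q × Fin q) ℝ :=
  ∑ j : Fin p, (selPsi p q j) ⊗ₖ (selPsi p q j)

/-- Column-stacking vectorization: `vec(A)` at index `(j, i)` (i.e. `(j-1)m + i`) is `A i j`. -/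
def vec {m n : Type*} (A : Matrix m n ℝ) : n × m → ℝ := fun x => A x.2 x.1

section Aux

variable {p q : ℕ} (Qθ : Matrix (Fin p) (Fin p) ℝ) (Qψ : Matrix (Fin q) (Fin q) ℝ)

lemma kronSum_conj (hQθ : Qθ * Qθᵀ = 1) (hQψ : Qψ * Qψᵀ = 1)
    (dθ : Fin p → ℝ) (dψ : Fin q → ℝ) :
    kronSum (Qθ * diagonal dθ * Qθᵀ) (Qψ * diagonal dψ * Qψᵀ)
      = (Qθ ⊗ₖ Qψ) * diagonal (fun x : Fin p × Fin q => dθ x.1 + dψ x.2) * (Qθᵀ ⊗ₖ Qψᵀ) := by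
  have hd : (diagonal dθ ⊗ₖ (1 : Matrix (Fin q) (Fin q) ℝ)
      + (1 : Matrix (Fin p) (Fin p) ℝ) ⊗ₖ diagonal dψ)
      = diagonal (fun x : Fin p × Fin q => dθ x.1 + dψ x.2) := by
    ext ⟨a,b⟩ ⟨c,d⟩
    simp only [Matrix.add_apply, kroneckerMap_apply, diagonal, one_apply, of_apply, Prod.mk.injEq]
    by_cases h1 : a = c <;> by_cases h2 : b = d <;> simp [h1, h2]
  have h1 : (Qθ ⊗ₖ Qψ) * (diagonal dθ ⊗ₖ (1 : Matrix (Fin q) (Fin q) ℝ)) * (Qθᵀ ⊗ₖ Qψᵀ)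
      = (Qθ * diagonal dθ * Qθᵀ) ⊗ₖ (1 : Matrix (Fin q) (Fin q) ℝ) := by
    rw [← mul_kronecker_mul, ← mul_kronecker_mul, Matrix.mul_one, hQψ]
  have h2 : (Qθ ⊗ₖ Qψ) * ((1 : Matrix (Fin p) (Fin p) ℝ) ⊗ₖ diagonal dψ) * (Qθᵀ ⊗ₖ Qψᵀ)
      = (1 : Matrix (Fin p) (Fin p) ℝ) ⊗ₖ (Qψ * diagonal dψ * Qψᵀ) := by
    rw [← mul_kronecker_mul, ← mul_kronecker_mul, Matrix.mul_one, hQθ]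
  rw [kronSum, ← h1, ← h2, ← Matrix.add_mul, ← Matrix.mul_add, hd]

lemma kronSum_inv (hQθ : Qθ * Qθᵀ = 1) (hQθ' : Qθᵀ * Qθ = 1)
    (hQψ : Qψ * Qψᵀ = 1) (hQψ' : Qψᵀ * Qψ = 1)
    (dθ : Fin p → ℝ) (dψ : Fin q → ℝ)
    (hnz : ∀ (l : Fin p) (k : Fin q), dθ l + dψ k ≠ 0) :
    (kronSum (Qθ * diagonal dθ * Qθᵀ) (Qψ * diagonal dψ * Qψᵀ))⁻¹
      = (Qθ ⊗ₖ Qψ) * diagonal (fun x : Fin p × Fin q => (dθ x.1 + dψ x.2)⁻¹) * (Qθᵀ ⊗ₖ Qψᵀ) := by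
  apply inv_eq_right_inv
  rw [kronSum_conj Qθ Qψ hQθ hQψ]
  have hU : (Qθᵀ ⊗ₖ Qψᵀ) * (Qθ ⊗ₖ Qψ) = 1 := by
    rw [← mul_kronecker_mul, hQθ', hQψ', one_kronecker_one]
  have hU' : (Qθ ⊗ₖ Qψ) * (Qθᵀ ⊗ₖ Qψᵀ) = 1 := by
    rw [← mul_kronecker_mul, hQθ, hQψ, one_kronecker_one]
  simp only [Matrix.mul_assoc]
  rw [← Matrix.mul_assoc (Qθᵀ ⊗ₖ Qψᵀ) (Qθ ⊗ₖ Qψ), hU, Matrix.one_mul,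
    ← Matrix.mul_assoc (diagonal _) (diagonal _), diagonal_mul_diagonal,
    show (fun x : Fin p × Fin q => (dθ x.1 + dψ x.2) * (dθ x.1 + dψ x.2)⁻¹)
      = fun _ => (1:ℝ) from funext fun x => mul_inv_cancel₀ (hnz x.1 x.2),
    diagonal_one, Matrix.one_mul, hU']

lemma selTheta_conj (W : Matrix (Fin p × Fin q) (Fin p × Fin q) ℝ) (i : Fin q) (a b : Fin p) :
    ((selTheta p q i)ᵀ * W * (selTheta p q i)) a b = W (a, i) (b, i) := by
  simp [selTheta, Matrix.mul_apply]

lemma selPsi_conj (W : Matrix (Fin p × Fin q) (Fin p × Fin q) ℝ) (j : Fin p) (a b : Fin q) :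
    ((selPsi p q j)ᵀ * W * (selPsi p q j)) a b = W (j, a) (j, b) := by
  simp [selPsi, Matrix.mul_apply]

lemma collapse_theta (hQψ' : Qψᵀ * Qψ = 1) (c : Fin p × Fin q → ℝ) :
    (∑ i : Fin q, (selTheta p q i)ᵀ * ((Qθ ⊗ₖ Qψ) * diagonal c * (Qθᵀ ⊗ₖ Qψᵀ)) * selTheta p q i)
      = Qθ * (∑ k : Fin q, diagonal (fun l => c (l, k))) * Qθᵀ := by
  have hψ : ∀ k : Fin q, (∑ i : Fin q, Qψ i k * Qψ i k) = 1 := by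
    intro k
    have := congrFun (congrFun hQψ' k) k
    simpa [Matrix.mul_apply, Matrix.one_apply] using this
  ext a b
  simp only [Matrix.sum_apply, selTheta_conj]
  have hW : ∀ i : Fin q, ((Qθ ⊗ₖ Qψ) * diagonal c * (Qθᵀ ⊗ₖ Qψᵀ)) (a, i) (b, i)
      = ∑ u : Fin p × Fin q, Qθ a u.1 * Qψ i u.2 * c u * (Qθ b u.1 * Qψ i u.2) := by
    intro i
    simp [Matrix.mul_apply, Matrix.mul_diagonal, Matrix.diagonal_apply, kroneckerMap_apply,
      Finset.sum_ite_eq]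
  rw [Finset.sum_congr rfl fun i _ => hW i, Finset.sum_comm]
  have hterm : ∀ u : Fin p × Fin q,
      (∑ i : Fin q, Qθ a u.1 * Qψ i u.2 * c u * (Qθ b u.1 * Qψ i u.2))
        = Qθ a u.1 * c u * Qθ b u.1 := by
    intro u
    rw [show (fun i => Qθ a u.1 * Qψ i u.2 * c u * (Qθ b u.1 * Qψ i u.2))
        = fun i => (Qθ a u.1 * c u * Qθ b u.1) * (Qψ i u.2 * Qψ i u.2) from funext fun i => by ring,
      ← Finset.mul_sum, hψ u.2, mul_one]
  rw [Finset.sum_congr rfl fun u _ => hterm u, Fintype.sum_prod_type]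
  simp only [Matrix.mul_apply, Matrix.sum_apply, Matrix.mul_diagonal, transpose_apply,
    Finset.sum_mul, Finset.mul_sum]
  exact Finset.sum_congr rfl fun l _ => Finset.sum_congr rfl fun k _ => by
    simp [Matrix.diagonal_apply, mul_ite, Finset.sum_ite_eq]

lemma collapse_psi (hQθ' : Qθᵀ * Qθ = 1) (c : Fin p × Fin q → ℝ) :
    (∑ j : Fin p, (selPsi p q j)ᵀ * ((Qθ ⊗ₖ Qψ) * diagonal c * (Qθᵀ ⊗ₖ Qψᵀ)) * selPsi p q j)
      = Qψ * (∑ l : Fin p, diagonal (fun k => c (l, k))) * Qψᵀ := by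
  have hθ : ∀ l : Fin p, (∑ j : Fin p, Qθ j l * Qθ j l) = 1 := by
    intro l
    have := congrFun (congrFun hQθ' l) l
    simpa [Matrix.mul_apply, Matrix.one_apply] using this
  ext a b
  simp only [Matrix.sum_apply, selPsi_conj]
  have hW : ∀ j : Fin p, ((Qθ ⊗ₖ Qψ) * diagonal c * (Qθᵀ ⊗ₖ Qψᵀ)) (j, a) (j, b)
      = ∑ u : Fin p × Fin q, Qθ j u.1 * Qψ a u.2 * c u * (Qθ j u.1 * Qψ b u.2) := by
    intro j
    simp [Matrix.mul_apply, Matrix.mul_diagonal, Matrix.diagonal_apply, kroneckerMap_apply,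
      Finset.sum_ite_eq]
  rw [Finset.sum_congr rfl fun j _ => hW j, Finset.sum_comm]
  have hterm : ∀ u : Fin p × Fin q,
      (∑ j : Fin p, Qθ j u.1 * Qψ a u.2 * c u * (Qθ j u.1 * Qψ b u.2))
        = Qψ a u.2 * c u * Qψ b u.2 := by
    intro u
    rw [show (fun j => Qθ j u.1 * Qψ a u.2 * c u * (Qθ j u.1 * Qψ b u.2))
        = fun j => (Qψ a u.2 * c u * Qψ b u.2) * (Qθ j u.1 * Qθ j u.1) from funext fun j => by ring,
      ← Finset.mul_sum, hθ u.1, mul_one]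
  rw [Finset.sum_congr rfl fun u _ => hterm u, Fintype.sum_prod_type]
  simp only [Matrix.mul_apply, Matrix.sum_apply, Matrix.mul_diagonal, transpose_apply,
    Finset.sum_mul, Finset.mul_sum]
  rw [Finset.sum_comm]
  exact Finset.sum_congr rfl fun k _ => Finset.sum_congr rfl fun l _ => by
    simp [Matrix.diagonal_apply, mul_ite, Finset.sum_ite_eq]

lemma diag_shift_inv {n : ℕ} (v : Fin n → ℝ) (t : ℝ) (h : ∀ l, v l + t ≠ 0) :
    (diagonal v + t • (1 : Matrix (Fin n) (Fin n) ℝ))⁻¹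
      = diagonal (fun l => (v l + t)⁻¹) := by
  rw [smul_one_eq_diagonal, diagonal_add]
  apply inv_eq_right_inv
  rw [diagonal_mul_diagonal,
    show (fun l => (v l + t) * (v l + t)⁻¹) = fun _ => (1:ℝ) from
      funext fun l => mul_inv_cancel₀ (h l), diagonal_one]

end Aux

/-- Eigendecomposition form of the collapsed inverse `W = (Θ⊕Ψ)⁻¹`:
`∑_i (I_p⊗e_{q,i})ᵀ W (I_p⊗e_{q,i}) = Q_Θ (∑_k (Λ_Θ + λ_{Ψ,k} I_p)⁻¹) Q_Θᵀ`, and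
symmetrically for the `Ψ`-collapse. -/
theorem collapsed_inverse_eig (p q : ℕ)
    (Qθ : Matrix (Fin p) (Fin p) ℝ) (Qψ : Matrix (Fin q) (Fin q) ℝ)
    (hQθ : Qθ * Qθᵀ = 1) (hQθ' : Qθᵀ * Qθ = 1)
    (hQψ : Qψ * Qψᵀ = 1) (hQψ' : Qψᵀ * Qψ = 1)
    (dθ : Fin p → ℝ) (dψ : Fin q → ℝ)
    (hnz : ∀ (l : Fin p) (k : Fin q), dθ l + dψ k ≠ 0) :
    (∑ i : Fin q, (selTheta p q i)ᵀ
        * (kronSum (Qθ * diagonal dθ * Qθᵀ) (Qψ * diagonal dψ * Qψᵀ))⁻¹ * selTheta p q i)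
      = Qθ * (∑ k : Fin q, (diagonal dθ + dψ k • (1 : Matrix (Fin p) (Fin p) ℝ))⁻¹) * Qθᵀ ∧
    (∑ j : Fin p, (selPsi p q j)ᵀ
        * (kronSum (Qθ * diagonal dθ * Qθᵀ) (Qψ * diagonal dψ * Qψᵀ))⁻¹ * selPsi p q j)
      = Qψ * (∑ l : Fin p, (diagonal dψ + dθ l • (1 : Matrix (Fin q) (Fin q) ℝ))⁻¹) * Qψᵀ := by
  rw [kronSum_inv Qθ Qψ hQθ hQθ' hQψ hQψ' dθ dψ hnz]
  constructor
  · rw [collapse_theta Qθ Qψ hQψ']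
    congr 1
    congr 1
    exact Finset.sum_congr rfl fun k _ => by
      rw [diag_shift_inv dθ (dψ k) (fun l => hnz l k)]
  · rw [collapse_psi Qθ Qψ hQθ']
    congr 1
    congr 1
    exact Finset.sum_congr rfl fun l _ => by
      rw [diag_shift_inv dψ (dθ l) (fun k => by rw [add_comm]; exact hnz l k)]
      simp [add_comm]

end EiGLasso
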